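/- If G is a connected graph such that every two nonadjacent vertices u, v satisfy d(u) + d(v) ≥ n − 1 where n is the number of vertices, then the edge-connectivity of G equals its minimum degree. -/

import Mathlib

open SimpleGraph

/-- The edge-connectivity of `G`: the minimum number of edges whose deletion disconnects `G`. -/
noncomputable def edgeConn {V : Type*} [Fintype V] (G : SimpleGraph V) : ℕ :=
  sInf {k | ∃ F : Finset (Sym2 V), ↑F ⊆ G.edgeSet ∧ F.card = k ∧ ¬ (G.deleteEdges ↑F).Connected}

/-- The minimum degree of `G`. -/
noncomputable def minDeg {V : Type*} [Fintype V] (G : SimpleGraph V) : ℕ :=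
  sInf {d | ∃ v : V, d = (G.neighborSet v).ncard}


open SimpleGraph Finset

private lemma lesniak_count {V : Type*} [Fintype V] [DecidableEq V] (G : SimpleGraph V)
    [DecidableRel G.Adj] (F : Finset (Sym2 V)) (T : Finset V) (δ : ℕ) (hT : T.Nonempty)
    (hdeg : ∀ u ∈ T, δ ≤ G.degree u)
    (hb : ∀ u ∈ T, ((G.neighborFinset u) \ T).Nonempty)
    (hcut : ∀ u ∈ T, ∀ y ∈ G.neighborFinset u \ T, s(u, y) ∈ F) :
    δ ≤ F.card := by
  set b : V → ℕ := fun u => ((G.neighborFinset u) \ T).card with hbdef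
  have hsum : ∑ u ∈ T, b u ≤ F.card := by
    rw [← Finset.card_sigma]
    apply Finset.card_le_card_of_injOn (fun p => s(p.1, p.2))
    · rintro ⟨u, y⟩ hp
      rw [Finset.mem_coe, Finset.mem_sigma] at hp
      exact hcut _ hp.1 _ hp.2
    · rintro ⟨u, y⟩ hp ⟨u', y'⟩ hp' he
      rw [Finset.mem_coe, Finset.mem_sigma] at hp hp'
      rw [Sym2.eq_iff] at he
      obtain ⟨h1, h2⟩ | ⟨h1, h2⟩ := he
      · obtain rfl : u = u' := h1
        obtain rfl : y = y' := h2
        rfl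
      · exfalso
        exact (Finset.mem_sdiff.mp hp'.2).2 (h1 ▸ hp.1)
  have hb1 : ∀ u ∈ T, 1 ≤ b u := fun u hu => Finset.card_pos.mpr (hb u hu)
  have hsT : T.card ≤ ∑ u ∈ T, b u := by
    calc T.card = ∑ _u ∈ T, 1 := by simp
    _ ≤ ∑ u ∈ T, b u := Finset.sum_le_sum hb1
  by_cases hs : δ ≤ T.card
  · omega
  · push_neg at hs
    have hT1 : 1 ≤ T.card := Finset.card_pos.mpr hT
    have hbig : ∀ u ∈ T, δ + 1 - T.card ≤ b u := by
      intro u hu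
      have h1 : G.degree u ≤ (T.card - 1) + b u := by
        have hsub : G.neighborFinset u ⊆ (T.erase u) ∪ ((G.neighborFinset u) \ T) := by
          intro y hy
          rw [Finset.mem_union, Finset.mem_erase]
          by_cases hyT : y ∈ T
          · exact Or.inl ⟨fun hyu => G.notMem_neighborFinset_self u (hyu ▸ hy), hyT⟩
          · exact Or.inr (Finset.mem_sdiff.mpr ⟨hy, hyT⟩)
        calc G.degree u ≤ ((T.erase u) ∪ ((G.neighborFinset u) \ T)).card :=
              Finset.card_le_card hsub
          _ ≤ (T.erase u).card + b u := Finset.card_union_le _ _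
          _ = (T.card - 1) + b u := by rw [Finset.card_erase_of_mem hu]
      have h2 := hdeg u hu
      omega
    have hsum2 : T.card * (δ + 1 - T.card) ≤ ∑ u ∈ T, b u := by
      calc T.card * (δ + 1 - T.card) = ∑ _u ∈ T, (δ + 1 - T.card) := by
            rw [Finset.sum_const, smul_eq_mul]
        _ ≤ ∑ u ∈ T, b u := Finset.sum_le_sum hbig
    have key : δ ≤ T.card * (δ + 1 - T.card) := by
      have h2 : δ + 1 - T.card = (δ - T.card) + 1 := by omega
      rw [h2, Nat.mul_add, Nat.mul_one]
      have h3 : 1 * (δ - T.card) ≤ T.card * (δ - T.card) := Nat.mul_le_mul_right _ hT1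
      omega
    omega

theorem lesniak_edgeConn_eq_minDeg' {V : Type*} [Fintype V] (G : SimpleGraph V)
    (hG : G.Connected) (hcard : 2 ≤ Fintype.card V)
    (h : ∀ u v : V, u ≠ v → ¬ G.Adj u v →
      Fintype.card V - 1 ≤ (G.neighborSet u).ncard + (G.neighborSet v).ncard) :
    sInf {k | ∃ F : Finset (Sym2 V), ↑F ⊆ G.edgeSet ∧ F.card = k ∧ ¬ (G.deleteEdges ↑F).Connected}
      = sInf {d | ∃ v : V, d = (G.neighborSet v).ncard} := by
  classical
  have hne : Nonempty V := Fintype.card_pos_iff.mp (by omega)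
  -- ncard of neighborSet is degree
  have hnc : ∀ v : V, (G.neighborSet v).ncard = G.degree v := by
    intro v
    rw [← Nat.card_coe_set_eq, Nat.card_eq_fintype_card, G.card_neighborSet_eq_degree]
  set δ := sInf {d | ∃ v : V, d = (G.neighborSet v).ncard} with hδ
  obtain ⟨v₀, hv₀⟩ : δ ∈ {d | ∃ v : V, d = (G.neighborSet v).ncard} :=
    Nat.sInf_mem ⟨_, Classical.arbitrary V, rfl⟩
  have hδle : ∀ v : V, δ ≤ G.degree v := by
    intro v
    rw [← hnc]
    exact Nat.sInf_le ⟨v, rfl⟩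
  have hv₀d : G.degree v₀ = δ := by rw [← hnc, ← hv₀]
  -- membership: deleting edges at v₀ disconnects
  have hmem : δ ∈ {k | ∃ F : Finset (Sym2 V),
      ↑F ⊆ G.edgeSet ∧ F.card = k ∧ ¬ (G.deleteEdges ↑F).Connected} := by
    refine ⟨G.incidenceFinset v₀, ?_, ?_, ?_⟩
    · intro e he
      rw [Finset.mem_coe, mem_incidenceFinset] at he
      exact G.incidenceSet_subset v₀ he
    · rw [card_incidenceFinset_eq_degree, hv₀d]
    · intro hc
      obtain ⟨w, hw⟩ := Fintype.exists_ne_of_one_lt_card (by omega) v₀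
      obtain ⟨p⟩ := hc.preconnected v₀ w
      cases p with
      | nil => exact hw rfl
      | cons ha _ =>
        rw [deleteEdges_adj] at ha
        exact ha.2 (by
          rw [Finset.mem_coe, mem_incidenceFinset]
          exact ⟨(G.mem_edgeSet.mpr ha.1), Sym2.mem_mk_left _ _⟩)
  refine le_antisymm (Nat.sInf_le hmem) (le_csInf ⟨_, hmem⟩ ?_)
  rintro k ⟨F, hFsub, rfl, hFnc⟩
  set H := G.deleteEdges (↑F : Set (Sym2 V)) with hH
  rw [connected_iff] at hFnc
  push_neg at hFnc
  have hnp : ¬ H.Preconnected := fun hp => (hFnc hp).false hne.some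
  rw [Preconnected] at hnp
  push_neg at hnp
  obtain ⟨a, c, hac⟩ := hnp
  set S : Finset V := Finset.univ.filter (fun x => H.Reachable a x) with hS
  have haS : a ∈ S := Finset.mem_filter.mpr ⟨Finset.mem_univ _, Reachable.refl a⟩
  have hcS : c ∉ S := by simp [hS, hac]
  have hcut : ∀ x y : V, x ∈ S → y ∉ S → G.Adj x y → s(x, y) ∈ F := by
    intro x y hx hy hadj
    by_contra hF
    have : H.Adj x y := by rw [hH, deleteEdges_adj]; exact ⟨hadj, hF⟩
    rw [hS, Finset.mem_filter] at hx
    exact hy (by rw [hS, Finset.mem_filter]; exact ⟨Finset.mem_univ _, hx.2.trans this.reachable⟩)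
  by_cases h1 : ∀ u ∈ S, ((G.neighborFinset u) \ S).Nonempty
  · exact lesniak_count G F S δ ⟨a, haS⟩ (fun u _ => hδle u) h1
      (fun u hu y hy => by
        rw [Finset.mem_sdiff, mem_neighborFinset] at hy
        exact hcut u y hu hy.2 hy.1)
  · push_neg at h1
    obtain ⟨u, huS, hu⟩ := h1
    by_cases h2 : ∀ v ∈ Sᶜ, ((G.neighborFinset v) \ Sᶜ).Nonempty
    · refine lesniak_count G F Sᶜ δ ⟨c, Finset.mem_compl.mpr hcS⟩ (fun u _ => hδle u) h2 ?_
      intro v hv y hy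
      rw [Finset.mem_sdiff, mem_neighborFinset, Finset.mem_compl, not_not] at hy
      rw [Sym2.eq_swap]
      exact hcut y v hy.2 (Finset.mem_compl.mp hv) hy.1.symm
    · push_neg at h2
      obtain ⟨v, hvS, hv⟩ := h2
      rw [Finset.mem_compl] at hvS
      rw [Finset.sdiff_eq_empty_iff_subset] at hu hv
      -- u's neighbors all in S, v's neighbors all in Sᶜ
      exfalso
      have huv : u ≠ v := fun he => hvS (he ▸ huS)
      have hnadj : ¬ G.Adj u v := fun hadj =>
        hvS (hu (mem_neighborFinset G u v |>.mpr hadj))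
      have hdu : G.degree u ≤ S.card - 1 := by
        have : G.neighborFinset u ⊆ S.erase u :=
          fun y hy => Finset.mem_erase.mpr
            ⟨fun hyu => G.notMem_neighborFinset_self u (hyu ▸ hy), hu hy⟩
        calc G.degree u ≤ (S.erase u).card := Finset.card_le_card this
          _ = S.card - 1 := Finset.card_erase_of_mem huS
      have hdv : G.degree v ≤ Sᶜ.card - 1 := by
        have : G.neighborFinset v ⊆ Sᶜ.erase v :=
          fun y hy => Finset.mem_erase.mpr
            ⟨fun hyv => G.notMem_neighborFinset_self v (hyv ▸ hy), hv hy⟩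
        calc G.degree v ≤ (Sᶜ.erase v).card := Finset.card_le_card this
          _ = Sᶜ.card - 1 := Finset.card_erase_of_mem (Finset.mem_compl.mpr hvS)
      have hcc : S.card + Sᶜ.card = Fintype.card V := Finset.card_add_card_compl S
      have hS1 : 1 ≤ S.card := Finset.card_pos.mpr ⟨a, haS⟩
      have hSc1 : 1 ≤ Sᶜ.card := Finset.card_pos.mpr ⟨c, Finset.mem_compl.mpr hcS⟩
      have hsum := h u v huv hnadj
      rw [hnc, hnc] at hsum
      omega

/-- Lesniak: if every two distinct nonadjacent vertices have degree sum at least `n - 1`,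
then `κ'(G) = δ(G)`. -/
theorem lesniak_edgeConn_eq_minDeg {V : Type*} [Fintype V] (G : SimpleGraph V)
    (hG : G.Connected) (hcard : 2 ≤ Fintype.card V)
    (h : ∀ u v : V, u ≠ v → ¬ G.Adj u v →
      Fintype.card V - 1 ≤ (G.neighborSet u).ncard + (G.neighborSet v).ncard) :
    edgeConn G = minDeg G := by
  exact lesniak_edgeConn_eq_minDeg' G hG hcard h
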